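/- Let d ≥ 2 and let N be a natural number with 1 ≤ N < d². Let ψ_0, …, ψ_N be unit vectors in ℂ^d such that the rank-one projections |ψ_y⟩⟨ψ_y| (y = 0, …, N) are linearly independent over ℂ, and let φ_0, …, φ_{d²−1} be unit vectors in ℂ^d such that the rank-one projections |φ_x⟩⟨φ_x| (x = 0, …, d²−1) are linearly independent over ℂ (hence span the full space of d×d complex matrices). Let Γ_1, …, Γ_N be arbitrary d×d complex matrices. Then there do NOT exist scalars λ_{i,y} ∈ ℂ (1 ≤ i ≤ N, 0 ≤ y ≤ N) and effects E_0, …, E_{d²−1} on ℂ^d such that Tr((Σ_{i=1}^N λ_{i,y} Γ_i) · E_x) = |⟨ψ_y, φ_x⟩|² holds for all x ∈ {0,…,d²−1} and y ∈ {0,…,N}. In particular, the quantum correlations p_Q(0|x,y) = |⟨ψ_y, φ_x⟩|² cannot be realized by preparations lying in the linear span of any family of fewer than d² linearly independent free states. -/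

import Mathlib

open Matrix Complex
open scoped ComplexOrder

/-- The rank-one projection (outer product) `|ψ⟩⟨ψ|` of a vector `ψ ∈ ℂ^d`. -/
noncomputable def outer {d : ℕ} (ψ : Fin d → ℂ) : Matrix (Fin d) (Fin d) ℂ :=
  Matrix.of fun i j => ψ i * (starRingEnd ℂ) (ψ j)

/-- The inner product `⟨ψ, φ⟩ = ∑ i, conj (ψ i) * φ i` on `ℂ^d`. -/
noncomputable def qinner {d : ℕ} (ψ φ : Fin d → ℂ) : ℂ :=
  ∑ i, (starRingEnd ℂ) (ψ i) * φ i

/-- An effect (POVM element) on `ℂ^d`: both `E` and `1 - E` are positive semidefinite. -/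
def IsEffect {d : ℕ} (E : Matrix (Fin d) (Fin d) ℂ) : Prop :=
  E.PosSemidef ∧ (1 - E).PosSemidef


lemma norm_sq_eq_conj_mul (z : ℂ) : ((‖z‖ ^ 2 : ℝ) : ℂ) = (starRingEnd ℂ) z * z := by
  rw [← Complex.normSq_eq_norm_sq, Complex.normSq_eq_conj_mul_self]

lemma trace_outer_outer {d : ℕ} (a b : Fin d → ℂ) :
    (outer a * outer b).trace = (starRingEnd ℂ) (qinner a b) * qinner a b := by
  simp only [Matrix.trace, Matrix.diag, Matrix.mul_apply, outer, qinner, Matrix.of_apply,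
    map_sum, _root_.map_mul, Complex.conj_conj, Finset.sum_mul_sum]
  refine Finset.sum_congr rfl fun i _ => Finset.sum_congr rfl fun j _ => ?_
  ring

lemma trace_mul_eq_zero {d : ℕ} (M : Matrix (Fin d) (Fin d) ℂ)
    (hM : ∀ A, (M * A).trace = 0) : M = 0 := by
  ext i j
  have h1 : (M * Matrix.single j i 1).trace = M i j := by
    simp [Matrix.trace, Matrix.diag, Matrix.mul_apply, Matrix.single, ite_and,
      Finset.sum_ite_eq, Finset.sum_ite_eq']
  have := hM (Matrix.single j i 1)
  rw [h1] at this
  simpa using this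

/-- Theorem 1: if the free states lie in the span of `N < d²` linearly independent
matrices `Γ_i`, then the quantum correlations `p_Q(0|x,y) = |⟨ψ_y, φ_x⟩|²` built from
linearly independent pure preparations `ψ_0, …, ψ_N` and a spanning family of
pure effects `φ_0, …, φ_{d²-1}` cannot be realized by free states. -/
theorem stmt_0 (d N : ℕ) (hd : 2 ≤ d) (hN1 : 1 ≤ N) (hN2 : N < d ^ 2)
    (ψ : Fin (N + 1) → Fin d → ℂ) (hψu : ∀ y, qinner (ψ y) (ψ y) = 1)
    (hψli : LinearIndependent ℂ fun y => outer (ψ y))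
    (φ : Fin (d ^ 2) → Fin d → ℂ) (hφu : ∀ x, qinner (φ x) (φ x) = 1)
    (hφli : LinearIndependent ℂ fun x => outer (φ x))
    (Γ : Fin N → Matrix (Fin d) (Fin d) ℂ) :
    ¬ ∃ (lam : Fin N → Fin (N + 1) → ℂ)
        (E : Fin (d ^ 2) → Matrix (Fin d) (Fin d) ℂ),
        (∀ x, IsEffect (E x)) ∧
        ∀ (x : Fin (d ^ 2)) (y : Fin (N + 1)),
          ((∑ i, lam i y • Γ i) * E x).trace
            = ((‖qinner (ψ y) (φ x)‖ ^ 2 : ℝ) : ℂ) := by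
  rintro ⟨lam, E, hE, h⟩
  -- the N+1 coefficient vectors in ℂ^N are linearly dependent
  have hdep : ¬ LinearIndependent ℂ (fun y : Fin (N + 1) => fun i : Fin N => lam i y) := by
    intro hli
    have hcard := hli.fintype_card_le_finrank
    simp [Module.finrank_fintype_fun_eq_card] at hcard
  rw [Fintype.not_linearIndependent_iff] at hdep
  obtain ⟨g, hg0, y0, hy0⟩ := hdep
  have hglam : ∀ i : Fin N, ∑ y, g y * lam i y = 0 := by
    intro i
    have := congrFun hg0 i
    simpa using this
  -- the corresponding combination of the states ρ_y vanishes
  have hrho : (∑ y, g y • ∑ i, lam i y • Γ i) = 0 := by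
    simp_rw [Finset.smul_sum, smul_smul]
    rw [Finset.sum_comm]
    simp_rw [← Finset.sum_smul, hglam, zero_smul, Finset.sum_const_zero]
  set M : Matrix (Fin d) (Fin d) ℂ := ∑ y, g y • outer (ψ y) with hMdef
  -- Tr(M ⋅ outer (φ x)) = 0 for every x
  have hMx : ∀ x, (M * outer (φ x)).trace = 0 := by
    intro x
    have h1 : ∀ y, (outer (ψ y) * outer (φ x)).trace = ((∑ i, lam i y • Γ i) * E x).trace := by
      intro y
      rw [h x y, trace_outer_outer, norm_sq_eq_conj_mul]
    calc (M * outer (φ x)).trace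
        = ∑ y, g y • (outer (ψ y) * outer (φ x)).trace := by
          rw [hMdef, Matrix.sum_mul]
          simp [Matrix.smul_mul, Matrix.trace_sum]
      _ = ∑ y, g y • ((∑ i, lam i y • Γ i) * E x).trace := by
          refine Finset.sum_congr rfl fun y _ => by rw [h1 y]
      _ = ((∑ y, g y • ∑ i, lam i y • Γ i) * E x).trace := by
          rw [Matrix.sum_mul]
          simp [Matrix.smul_mul, Matrix.trace_sum]
      _ = 0 := by rw [hrho, Matrix.zero_mul, Matrix.trace_zero]
  -- the outer (φ x) form a basis, so Tr(M ⋅ A) = 0 for all A, hence M = 0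
  have hM0 : M = 0 := by
    have hcard : Fintype.card (Fin (d ^ 2))
        = Module.finrank ℂ (Matrix (Fin d) (Fin d) ℂ) := by
      simp [Module.finrank_matrix, sq]
    haveI : Nonempty (Fin (d ^ 2)) := ⟨⟨0, by positivity⟩⟩
    let b := basisOfLinearIndependentOfCardEqFinrank hφli hcard
    refine trace_mul_eq_zero M fun A => ?_
    let L : Matrix (Fin d) (Fin d) ℂ →ₗ[ℂ] ℂ :=
      (Matrix.traceLinearMap (Fin d) ℂ ℂ).comp (LinearMap.mulLeft ℂ M)
    have hL : L = 0 := by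
      refine b.ext fun x => ?_
      have hbx : b x = outer (φ x) := by
        simp [b, coe_basisOfLinearIndependentOfCardEqFinrank]
      simp [L, hbx, LinearMap.mulLeft_apply, hMx x]
    have := DFunLike.congr_fun hL A
    simpa [L, LinearMap.mulLeft_apply] using this
  -- contradiction with linear independence of the outer (ψ y)
  exact hy0 (Fintype.linearIndependent_iff.mp hψli g hM0 y0)
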